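/- Let a, b, c, d be positive integers with ad − bc ≠ 0 and let f_A : ℂ² → ℂ² be the monomial map f_A(z,w) = (z^a w^b, z^c w^d). Then the topological degree of the germ of f_A at 0 equals |ad − bc|. -/

import Mathlib

open scoped ENat

open Polynomial

open Polynomial

lemma exists_pow_eq_c (n : ℕ) (hn : 0 < n) (w : ℂ) : ∃ x : ℂ, x ^ n = w := by
  rcases eq_or_ne w 0 with rfl | hw
  · exact ⟨0, zero_pow hn.ne'⟩
  · refine ⟨Complex.exp (Complex.log w / n), ?_⟩
    rw [← Complex.exp_nat_mul, mul_div_cancel₀ _ (by exact_mod_cast hn.ne' : (n : ℂ) ≠ 0),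
      Complex.exp_log hw]

lemma card_pow_eq_c (n : ℕ) (hn : 0 < n) (w : ℂ) (hw : w ≠ 0) :
    (Polynomial.nthRoots n w).toFinset.card = n := by
  have hζ := Complex.isPrimitiveRoot_exp n hn.ne'
  rw [Multiset.toFinset_card_of_nodup (hζ.nthRoots_nodup hw)]
  rw [hζ.card_nthRoots, if_pos (exists_pow_eq_c n hn w)]

lemma mem_pow_eq_c (n : ℕ) (hn : 0 < n) (w x : ℂ) :
    x ∈ (Polynomial.nthRoots n w).toFinset ↔ x ^ n = w := by
  rw [Multiset.mem_toFinset, Polynomial.mem_nthRoots hn]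

lemma bezout_data (a b c d : ℕ) (ha : 0 < a)
    (hdet : (a:ℤ)*d - (b:ℤ)*c ≠ 0) :
    ∃ (g : ℕ) (x y a' c' e D' : ℤ), 0 < g ∧
      (a:ℤ) = g * a' ∧ (c:ℤ) = g * c' ∧ (g:ℤ) = x*a + y*c ∧ x*a' + y*c' = 1 ∧
      e = x*b + y*d ∧ (g:ℤ) * D' = (a:ℤ)*d - (b:ℤ)*c ∧ D' ≠ 0 ∧
      (b:ℤ) = a'*e - y*D' ∧ (d:ℤ) = c'*e + x*D' := by
  set g : ℕ := Int.gcd (a:ℤ) (c:ℤ) with hgdef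
  have hg : 0 < g := Int.gcd_pos_of_ne_zero_left _ (by exact_mod_cast ha.ne')
  have hgz : (g:ℤ) ≠ 0 := by exact_mod_cast hg.ne'
  obtain ⟨a', ha'⟩ : (g:ℤ) ∣ (a:ℤ) := Int.gcd_dvd_left (a:ℤ) (c:ℤ)
  obtain ⟨c', hc'⟩ : (g:ℤ) ∣ (c:ℤ) := Int.gcd_dvd_right (a:ℤ) (c:ℤ)
  set x := Int.gcdA (a:ℤ) (c:ℤ) with hxdef
  set y := Int.gcdB (a:ℤ) (c:ℤ) with hydef
  have hbez : (g:ℤ) = (a:ℤ) * x + (c:ℤ) * y := Int.gcd_eq_gcd_ab (a:ℤ) (c:ℤ)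
  have hbez' : x * a' + y * c' = 1 := by
    have : (g:ℤ) * (x * a' + y * c') = (g:ℤ) * 1 := by
      rw [mul_one]; linear_combination -hbez - x * ha' - y * hc'
    exact mul_left_cancel₀ hgz this
  refine ⟨g, x, y, a', c', x*b + y*d, a'*d - b*c', hg, ha', hc', by linarith [hbez],
    hbez', rfl, ?_, ?_, ?_, ?_⟩
  · linear_combination -(d:ℤ) * ha' + (b:ℤ) * hc'
  · intro h
    apply hdet
    have : (g:ℤ) * (a'*d - b*c') = (a:ℤ)*d - b*c := by
      linear_combination -(d:ℤ) * ha' + (b:ℤ) * hc'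
    rw [h, mul_zero] at this; linarith
  · linear_combination -(b:ℤ) * hbez'
  · linear_combination -(d:ℤ) * hbez'

lemma zpow_comb {u v : ℂ} (hu : u ≠ 0) (hv : v ≠ 0) (p q r s x y : ℤ) :
    (u^p * v^q)^x * (u^r * v^s)^y = u^(p*x + r*y) * v^(q*x + s*y) := by
  rw [mul_zpow, mul_zpow, ← zpow_mul, ← zpow_mul, ← zpow_mul, ← zpow_mul,
    zpow_add₀ hu, zpow_add₀ hv]; ring

lemma zpow_comb2 {u v : ℂ} (hu : u ≠ 0) (hv : v ≠ 0) (p q x t : ℤ) :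
    (u^p * v^q)^x * v^t = u^(p*x) * v^(q*x + t) := by
  rw [mul_zpow, ← zpow_mul, ← zpow_mul, zpow_add₀ hv]; ring

lemma zpow_eq_one_iff_natAbs {v : ℂ} (n : ℤ) : v ^ n = 1 ↔ v ^ n.natAbs = 1 := by
  rcases Int.natAbs_eq n with h | h
  · conv_lhs => rw [h, zpow_natCast]
  · conv_lhs => rw [h, zpow_neg, zpow_natCast]
    exact inv_eq_one

lemma solset_iff {u v : ℂ} (hu : u ≠ 0) (hv : v ≠ 0)
    (a b c d : ℕ) (g : ℕ) (x y a' c' e D' : ℤ)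
    (h1 : (a:ℤ) = g * a') (h2 : (c:ℤ) = g * c') (h3 : (g:ℤ) = x*a + y*c)
    (h4 : x*a' + y*c' = 1) (h5 : e = x*b + y*d)
    (h7 : (b:ℤ) = a'*e - y*D') (h8 : (d:ℤ) = c'*e + x*D') :
    (u^(a:ℤ) * v^(b:ℤ) = 1 ∧ u^(c:ℤ) * v^(d:ℤ) = 1) ↔
    (u^(g:ℤ) * v^e = 1 ∧ v^D' = 1) := by
  have idA := zpow_comb2 hu hv (g:ℤ) e a' (-(y*D'))
  rw [show (g:ℤ)*a' = a from h1.symm, show e*a' + -(y*D') = b by linarith [h7]] at idA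
  have idB := zpow_comb2 hu hv (g:ℤ) e c' (x*D')
  rw [show (g:ℤ)*c' = c from h2.symm, show e*c' + x*D' = d by linarith [h8]] at idB
  constructor
  · rintro ⟨hA, hB⟩
    have hge : u^(g:ℤ) * v^e = 1 := by
      have h := zpow_comb hu hv a b c d x y
      rw [hA, hB, one_zpow, one_zpow, one_mul,
        show (a:ℤ)*x + c*y = g by linarith [h3],
        show (b:ℤ)*x + d*y = e by linarith [h5]] at h
      exact h.symm
    have hA' : v^(-(y*D')) = 1 := by rw [← idA, hge, one_zpow, one_mul] at hA; exact hA
    have hB' : v^(x*D') = 1 := by rw [← idB, hge, one_zpow, one_mul] at hB; exact hB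
    refine ⟨hge, ?_⟩
    have : v^D' = (v^(x*D'))^a' * (v^(-(y*D')))^(-c') := by
      rw [← zpow_mul, ← zpow_mul, ← zpow_add₀ hv]
      congr 1
      linear_combination -D' * h4
    rw [hA', hB', one_zpow, one_zpow, one_mul] at this
    exact this
  · rintro ⟨hge, hD⟩
    have hA' : v^(-(y*D')) = 1 := by
      rw [show -(y*D') = D' * (-y) by ring, zpow_mul, hD, one_zpow]
    have hB' : v^(x*D') = 1 := by
      rw [show x*D' = D' * x by ring, zpow_mul, hD, one_zpow]
    constructor
    · rw [← idA, hge, hA', one_zpow, one_mul]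
    · rw [← idB, hge, hB', one_zpow, one_mul]

lemma G_finset (g m : ℕ) (hg : 0 < g) (hm : 0 < m) (e : ℤ) :
    ∃ F : Finset (ℂ × ℂ), F.card = g * m ∧
      ∀ p : ℂ × ℂ, p ∈ F ↔ (p.2 ^ m = 1 ∧ p.1 ^ (g:ℤ) * p.2 ^ e = 1) := by
  classical
  have hvne : ∀ v : ℂ, v ∈ nthRootsFinset m (1:ℂ) → v ≠ 0 := by
    intro v hv h0
    rw [mem_nthRootsFinset hm, h0, zero_pow hm.ne'] at hv
    exact zero_ne_one hv
  refine ⟨(nthRootsFinset m (1:ℂ)).biUnion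
    (fun v => ((nthRoots g (v ^ (-e))).toFinset).image (fun u => (u, v))), ?_, ?_⟩
  · rw [Finset.card_biUnion]
    · have : ∀ v ∈ nthRootsFinset m (1:ℂ),
          (((nthRoots g (v ^ (-e))).toFinset).image (fun u => (u, v))).card = g := by
        intro v hv
        rw [Finset.card_image_of_injective _ (fun u₁ u₂ h => (Prod.mk.injEq _ _ _ _).mp h |>.1)]
        exact card_pow_eq_c g hg _ (zpow_ne_zero _ (hvne v hv))
      rw [Finset.sum_congr rfl this, Finset.sum_const,
        (Complex.isPrimitiveRoot_exp m hm.ne').card_nthRootsFinset, smul_eq_mul, mul_comm]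
    · intro v₁ h₁ v₂ h₂ hne
      simp only [Finset.disjoint_left, Finset.mem_image]
      rintro ⟨z, w⟩ ⟨u₁, hu₁, h⟩ ⟨u₂, hu₂, h'⟩
      apply hne
      rw [← h] at h'
      exact ((Prod.mk.injEq _ _ _ _).mp h').2.symm ▸ rfl
  · rintro ⟨z, w⟩
    simp only [Finset.mem_biUnion, Finset.mem_image]
    constructor
    · rintro ⟨v, hv, u, hu, h⟩
      obtain ⟨rfl, rfl⟩ := (Prod.mk.injEq _ _ _ _).mp h
      have hw := (mem_nthRootsFinset hm 1).mp hv
      have hwne : v ≠ 0 := hvne _ hv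
      have hu' := (mem_pow_eq_c g hg _ _).mp hu
      refine ⟨hw, ?_⟩
      show u ^ (g:ℤ) * v ^ e = 1
      rw [← zpow_natCast u g] at hu'
      rw [hu', ← zpow_add₀ hwne, neg_add_cancel, zpow_zero]
    · rintro ⟨hw, huv⟩
      have hwne : w ≠ 0 := fun h0 => zero_ne_one (by rw [h0, zero_pow hm.ne'] at hw; exact hw)
      refine ⟨w, (mem_nthRootsFinset hm 1).mpr hw, z, ?_, rfl⟩
      have hz : z ^ (g:ℤ) = (w ^ e)⁻¹ := by
        have h2 := congrArg (· * (w ^ e)⁻¹) huv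
        simpa [mul_assoc, mul_inv_cancel₀ (zpow_ne_zero e hwne)] using h2
      rw [mem_pow_eq_c g hg, ← zpow_natCast z g, hz, ← zpow_neg]

lemma nonzero_of_G {u v : ℂ} {a b : ℕ} (ha : 0 < a) (hb : 0 < b)
    (h1 : u^a * v^b = 1) : u ≠ 0 ∧ v ≠ 0 := by
  constructor
  · intro h0; rw [h0, zero_pow ha.ne', zero_mul] at h1; exact zero_ne_one h1
  · intro h0; rw [h0, zero_pow hb.ne', mul_zero] at h1; exact zero_ne_one h1

lemma abs_eq_one_of_G (a b c d : ℕ) (ha : 0 < a) (hb : 0 < b) (hc : 0 < c) (hd : 0 < d)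
    (hdet : (a:ℤ)*d - (b:ℤ)*c ≠ 0) {u v : ℂ}
    (h1 : u^a * v^b = 1) (h2 : u^c * v^d = 1) :
    ‖u‖ = 1 ∧ ‖v‖ = 1 := by
  obtain ⟨hu, hv⟩ := nonzero_of_G ha hb h1
  have hau := norm_pos_iff.mpr hu
  have hav := norm_pos_iff.mpr hv
  set L := Real.log ‖u‖ with hL
  set M := Real.log ‖v‖ with hM
  have mklog : ∀ (p q : ℕ), u^p * v^q = 1 → (p:ℝ) * L + (q:ℝ) * M = 0 := by
    intro p q h
    have h' := congrArg (Real.log ∘ norm) h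
    simp only [Function.comp_apply, norm_mul, norm_pow, norm_one] at h'
    rwa [Real.log_mul (pow_ne_zero _ hau.ne') (pow_ne_zero _ hav.ne'),
      Real.log_pow, Real.log_pow, Real.log_one] at h'
  have e1 := mklog a b h1
  have e2 := mklog c d h2
  have hdr : (a:ℝ)*d - (b:ℝ)*c ≠ 0 := by
    intro h
    apply hdet
    have : ((a:ℤ)*d - (b:ℤ)*c : ℝ) = 0 := by push_cast; push_cast at h; linarith
    exact_mod_cast this
  have hL0 : L = 0 := by
    have h : ((a:ℝ)*d - (b:ℝ)*c) * L = 0 := by linear_combination (d:ℝ)*e1 - (b:ℝ)*e2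
    exact (mul_eq_zero.mp h).resolve_left hdr
  have hM0 : M = 0 := by
    have h : ((a:ℝ)*d - (b:ℝ)*c) * M = 0 := by linear_combination (a:ℝ)*e2 - (c:ℝ)*e1
    exact (mul_eq_zero.mp h).resolve_left hdr
  constructor
  · rw [← Real.exp_log hau, ← hL, hL0, Real.exp_zero]
  · rw [← Real.exp_log hav, ← hM, hM0, Real.exp_zero]

lemma G_main (a b c d : ℕ) (ha : 0 < a) (hb : 0 < b) (hc : 0 < c) (hd : 0 < d)
    (hdet : (a:ℤ)*d - (b:ℤ)*c ≠ 0) :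
    ∃ F : Finset (ℂ × ℂ), F.card = ((a:ℤ)*d - (b:ℤ)*c).natAbs ∧
      (∀ p : ℂ × ℂ, p ∈ F ↔ (p.1^a * p.2^b = 1 ∧ p.1^c * p.2^d = 1)) := by
  obtain ⟨g, x, y, a', c', e, D', hg, h1, h2, h3, h4, h5, h6, h7, h8, h9⟩ :=
    bezout_data a b c d ha hdet
  have hm : 0 < D'.natAbs := Int.natAbs_pos.mpr h7
  obtain ⟨F, hcard, hmem⟩ := G_finset g D'.natAbs hg hm e
  refine ⟨F, ?_, ?_⟩
  · rw [hcard, ← h6, Int.natAbs_mul, Int.natAbs_natCast]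
  · intro p
    rw [hmem p]
    constructor
    · rintro ⟨hv1, hv2⟩
      have hvne : p.2 ≠ 0 := by
        intro h0; rw [h0, zero_pow hm.ne'] at hv1; exact zero_ne_one hv1
      have hune : p.1 ≠ 0 := by
        intro h0
        rw [h0, zero_zpow _ (by exact_mod_cast hg.ne' : (g:ℤ) ≠ 0), zero_mul] at hv2
        exact zero_ne_one hv2
      have := (solset_iff hune hvne a b c d g x y a' c' e D' h1 h2 h3 h4 h5 h8 h9).mpr
        ⟨hv2, (zpow_eq_one_iff_natAbs D').mpr hv1⟩
      rwa [zpow_natCast, zpow_natCast, zpow_natCast, zpow_natCast] at this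
    · rintro ⟨hA, hB⟩
      obtain ⟨hune, hvne⟩ := nonzero_of_G ha hb hA
      rw [← zpow_natCast p.1 a, ← zpow_natCast p.2 b] at hA
      rw [← zpow_natCast p.1 c, ← zpow_natCast p.2 d] at hB
      obtain ⟨hge, hD⟩ :=
        (solset_iff hune hvne a b c d g x y a' c' e D' h1 h2 h3 h4 h5 h8 h9).mp ⟨hA, hB⟩
      exact ⟨(zpow_eq_one_iff_natAbs D').mp hD, hge⟩

lemma exists_base (a b c d : ℕ) (hdet : (a:ℤ)*d - (b:ℤ)*c ≠ 0)
    (y1 y2 : ℂ) (hy1 : y1 ≠ 0) (hy2 : y2 ≠ 0) :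
    ∃ z0 w0 : ℂ, z0 ≠ 0 ∧ w0 ≠ 0 ∧ z0^a * w0^b = y1 ∧ z0^c * w0^d = y2 := by
  have hD : ((a:ℂ)*d - (b:ℂ)*c) ≠ 0 := by
    intro h
    apply hdet
    exact_mod_cast (by push_cast; push_cast at h; linear_combination h :
      (((a:ℤ)*d - (b:ℤ)*c : ℤ) : ℂ) = 0)
  refine ⟨Complex.exp (((d:ℂ) * Complex.log y1 - b * Complex.log y2) / ((a:ℂ)*d - b*c)),
    Complex.exp (((a:ℂ) * Complex.log y2 - c * Complex.log y1) / ((a:ℂ)*d - b*c)),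
    Complex.exp_ne_zero _, Complex.exp_ne_zero _, ?_, ?_⟩
  · rw [← Complex.exp_nat_mul, ← Complex.exp_nat_mul, ← Complex.exp_add,
      show (a:ℂ) * (((d:ℂ) * Complex.log y1 - b * Complex.log y2) / ((a:ℂ)*d - b*c))
        + (b:ℂ) * (((a:ℂ) * Complex.log y2 - c * Complex.log y1) / ((a:ℂ)*d - b*c))
        = Complex.log y1 by field_simp; ring]
    exact Complex.exp_log hy1
  · rw [← Complex.exp_nat_mul, ← Complex.exp_nat_mul, ← Complex.exp_add,
      show (c:ℂ) * (((d:ℂ) * Complex.log y1 - b * Complex.log y2) / ((a:ℂ)*d - b*c))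
        + (d:ℂ) * (((a:ℂ) * Complex.log y2 - c * Complex.log y1) / ((a:ℂ)*d - b*c))
        = Complex.log y2 by rw [← mul_div_assoc, ← mul_div_assoc, ← add_div, div_eq_iff hD]; ring]
    exact Complex.exp_log hy2

lemma fiber_eq (a b c d : ℕ) (ha : 0 < a) (hb : 0 < b)
    {z0 w0 : ℂ} (hz0 : z0 ≠ 0) (hw0 : w0 ≠ 0)
    (f : ℂ × ℂ → ℂ × ℂ)
    (hf : ∀ p : ℂ × ℂ, f p = (p.1 ^ a * p.2 ^ b, p.1 ^ c * p.2 ^ d)) :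
    f ⁻¹' {(z0^a*w0^b, z0^c*w0^d)}
      = (fun p : ℂ × ℂ => (p.1 * z0, p.2 * w0)) ''
        {p : ℂ × ℂ | p.1^a * p.2^b = 1 ∧ p.1^c * p.2^d = 1} := by
  ext ⟨z, w⟩
  simp only [Set.mem_preimage, Set.mem_singleton_iff, hf, Prod.mk.injEq, Set.mem_image,
    Set.mem_setOf_eq, Prod.exists]
  constructor
  · rintro ⟨e1, e2⟩
    have hzw : z ≠ 0 ∧ w ≠ 0 := by
      refine nonzero_of_G ha hb (u := z / z0) (v := w / w0) ?_ |>.imp ?_ ?_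
      · rw [div_pow, div_pow, div_mul_div_comm, e1, div_self (mul_ne_zero (pow_ne_zero _ hz0) (pow_ne_zero _ hw0))]
      · exact fun h h0 => h (by rw [h0, zero_div])
      · exact fun h h0 => h (by rw [h0, zero_div])
    refine ⟨z / z0, w / w0, ⟨?_, ?_⟩, ?_, ?_⟩
    · rw [div_pow, div_pow, div_mul_div_comm, e1, div_self (mul_ne_zero (pow_ne_zero _ hz0) (pow_ne_zero _ hw0))]
    · rw [div_pow, div_pow, div_mul_div_comm, e2, div_self (mul_ne_zero (pow_ne_zero _ hz0) (pow_ne_zero _ hw0))]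
    · exact div_mul_cancel₀ z hz0
    · exact div_mul_cancel₀ w hw0
  · rintro ⟨u, v, ⟨g1, g2⟩, rfl, rfl⟩
    constructor
    · rw [mul_pow, mul_pow, show u^a*z0^a*(v^b*w0^b) = (u^a*v^b)*(z0^a*w0^b) by ring, g1,
        one_mul]
    · rw [mul_pow, mul_pow, show u^c*z0^c*(v^d*w0^d) = (u^c*v^d)*(z0^c*w0^d) by ring, g2,
        one_mul]

lemma fiber_main (a b c d : ℕ) (ha : 0 < a) (hb : 0 < b) (hc : 0 < c) (hd : 0 < d)
    (hdet : (a:ℤ)*d - (b:ℤ)*c ≠ 0)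
    (f : ℂ × ℂ → ℂ × ℂ)
    (hf : ∀ p : ℂ × ℂ, f p = (p.1 ^ a * p.2 ^ b, p.1 ^ c * p.2 ^ d))
    {z0 w0 : ℂ} (hz0 : z0 ≠ 0) (hw0 : w0 ≠ 0) :
    (f ⁻¹' {(z0^a*w0^b, z0^c*w0^d)}).Finite ∧
    (f ⁻¹' {(z0^a*w0^b, z0^c*w0^d)}).ncard = ((a:ℤ)*d - (b:ℤ)*c).natAbs ∧
    ∀ p ∈ f ⁻¹' {(z0^a*w0^b, z0^c*w0^d)},
      ‖p.1‖ = ‖z0‖ ∧ ‖p.2‖ = ‖w0‖ := by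
  obtain ⟨F, hFcard, hFmem⟩ := G_main a b c d ha hb hc hd hdet
  have hGF : {p : ℂ × ℂ | p.1^a * p.2^b = 1 ∧ p.1^c * p.2^d = 1} = ↑F := by
    ext p; rw [Set.mem_setOf_eq, Finset.mem_coe, hFmem]
  have hfib := fiber_eq a b c d ha hb hz0 hw0 f hf
  rw [hGF] at hfib
  have hinj : Function.Injective (fun p : ℂ × ℂ => (p.1 * z0, p.2 * w0)) := by
    rintro ⟨p1, p2⟩ ⟨q1, q2⟩ h
    obtain ⟨h1, h2⟩ := (Prod.mk.injEq _ _ _ _).mp h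
    exact Prod.ext (mul_right_cancel₀ hz0 h1) (mul_right_cancel₀ hw0 h2)
  refine ⟨?_, ?_, ?_⟩
  · rw [hfib]; exact (F.finite_toSet).image _
  · rw [hfib, Set.ncard_image_of_injective _ hinj, Set.ncard_coe_finset, hFcard]
  · intro p hp
    rw [hfib] at hp
    obtain ⟨⟨u, v⟩, huv, rfl⟩ := hp
    obtain ⟨hu1, hv1⟩ := abs_eq_one_of_G a b c d ha hb hc hd hdet
      ((hFmem _).mp huv).1 ((hFmem _).mp huv).2
    constructor
    · show ‖u * z0‖ = _
      rw [norm_mul, hu1, one_mul]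
    · show ‖v * w0‖ = _
      rw [norm_mul, hv1, one_mul]

/-- The topological degree of the germ at `0` of a map `f` whose representative is defined
on the domain `Ω ⊆ ℂ²`: the infimum over open neighborhoods `U ⊆ Ω` of `0` of the supremum,
over points `y` with finite fiber under `f|_U`, of the cardinality of that fiber. -/
noncomputable def topdeg (Ω : Set (ℂ × ℂ)) (f : ℂ × ℂ → ℂ × ℂ) : ℕ∞ :=
  ⨅ (U : Set (ℂ × ℂ)) (_ : IsOpen U ∧ (0 : ℂ × ℂ) ∈ U ∧ U ⊆ Ω),
    ⨆ (y : ℂ × ℂ) (_ : (U ∩ f ⁻¹' {y}).Finite), ((U ∩ f ⁻¹' {y}).ncard : ℕ∞)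

/-- The topological degree at `0` of the monomial map
`f_A(z,w) = (z^a w^b, z^c w^d)`, for positive integers `a, b, c, d` with `ad - bc ≠ 0`,
equals `|ad - bc|`. -/
theorem topdeg_monomial_map
    (a b c d : ℕ) (ha : 0 < a) (hb : 0 < b) (hc : 0 < c) (hd : 0 < d)
    (hdet : (a : ℤ) * d - (b : ℤ) * c ≠ 0)
    (f : ℂ × ℂ → ℂ × ℂ)
    (hf : ∀ p : ℂ × ℂ, f p = (p.1 ^ a * p.2 ^ b, p.1 ^ c * p.2 ^ d)) :
    topdeg Set.univ f = (((a : ℤ) * d - (b : ℤ) * c).natAbs : ℕ∞) := by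
  classical
  set N : ℕ := ((a:ℤ)*d - (b:ℤ)*c).natAbs with hN
  apply le_antisymm
  · -- upper bound
    unfold topdeg
    refine iInf₂_le_of_le Set.univ ⟨isOpen_univ, Set.mem_univ _, Set.Subset.rfl⟩ ?_
    refine iSup₂_le ?_
    rintro ⟨y1, y2⟩ hfin
    rw [Set.univ_inter] at hfin ⊢
    by_cases hy1 : y1 = 0
    · by_cases hy2 : y2 = 0
      · exfalso
        subst hy1; subst hy2
        have hinj : Function.Injective (fun z : ℂ => ((z, (0:ℂ)) : ℂ × ℂ)) :=
          fun z₁ z₂ h => ((Prod.mk.injEq _ _ _ _).mp h).1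
        have hr : Set.range (fun z : ℂ => ((z, (0:ℂ)) : ℂ × ℂ)) ⊆ f ⁻¹' {((0:ℂ), (0:ℂ))} := by
          rintro _ ⟨z, rfl⟩
          simp [hf, zero_pow hb.ne', zero_pow hd.ne']
        exact ((Set.infinite_range_of_injective hinj).mono hr) hfin
      · have hempty : f ⁻¹' {((y1 : ℂ), y2)} = ∅ := by
          ext ⟨z, w⟩
          simp only [Set.mem_preimage, hf, Set.mem_singleton_iff, Prod.mk.injEq,
            Set.mem_empty_iff_false, iff_false, not_and]
          intro h1 h2
          apply hy2
          rw [← h2]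
          rcases mul_eq_zero.mp (show z^a * w^b = 0 by rw [h1, hy1]) with h | h
          · rw [pow_eq_zero_iff ha.ne' |>.mp h, zero_pow hc.ne', zero_mul]
          · rw [pow_eq_zero_iff hb.ne' |>.mp h, zero_pow hd.ne', mul_zero]
        rw [hempty, Set.ncard_empty]
        exact zero_le
    · by_cases hy2 : y2 = 0
      · have hempty : f ⁻¹' {((y1 : ℂ), y2)} = ∅ := by
          ext ⟨z, w⟩
          simp only [Set.mem_preimage, hf, Set.mem_singleton_iff, Prod.mk.injEq,
            Set.mem_empty_iff_false, iff_false, not_and]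
          intro h1 h2
          apply hy1
          rw [← h1]
          rcases mul_eq_zero.mp (show z^c * w^d = 0 by rw [h2, hy2]) with h | h
          · rw [pow_eq_zero_iff hc.ne' |>.mp h, zero_pow ha.ne', zero_mul]
          · rw [pow_eq_zero_iff hd.ne' |>.mp h, zero_pow hb.ne', mul_zero]
        rw [hempty, Set.ncard_empty]
        exact zero_le
      · obtain ⟨z0, w0, hz0, hw0, e1, e2⟩ := exists_base a b c d hdet y1 y2 hy1 hy2
        obtain ⟨-, hcard, -⟩ := fiber_main a b c d ha hb hc hd hdet f hf hz0 hw0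
        rw [e1, e2] at hcard
        rw [hcard]
  · -- lower bound
    unfold topdeg
    refine le_iInf₂ ?_
    rintro U ⟨hUopen, hU0, -⟩
    obtain ⟨ε, hε, hball⟩ := Metric.isOpen_iff.mp hUopen 0 hU0
    have hr : (0:ℝ) < ε/2 := by linarith
    set z0 : ℂ := ((ε/2 : ℝ) : ℂ) with hz0def
    have hz0 : z0 ≠ 0 := by
      rw [hz0def]; exact_mod_cast hr.ne'
    obtain ⟨hfin, hcard, habs⟩ := fiber_main a b c d ha hb hc hd hdet f hf hz0 hz0
    set y : ℂ × ℂ := (z0^a*z0^b, z0^c*z0^d) with hy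
    have habs0 : ‖z0‖ = ε/2 := by
      rw [hz0def, Complex.norm_real, Real.norm_eq_abs, abs_of_pos hr]
    have hsub : f ⁻¹' {y} ⊆ U := by
      intro p hp
      obtain ⟨h1, h2⟩ := habs p hp
      apply hball
      rw [Metric.mem_ball, dist_zero_right, Prod.norm_def,
        h1, h2, habs0, max_self]
      linarith
    have hUcap : U ∩ f ⁻¹' {y} = f ⁻¹' {y} := Set.inter_eq_self_of_subset_right hsub
    refine le_iSup₂_of_le y (by rw [hUcap]; exact hfin) ?_
    rw [hUcap, hcard]
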